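/- Let V be a monoidal category and R, S Frobenius monoids in V. Then every morphism f : R → S that is simultaneously a monoid morphism and a comonoid morphism is an isomorphism, with inverse f⁻¹ = (1_R ⊗ σ_S) ∘ (1_R ⊗ f ⊗ 1_S) ∘ (ρ_R ⊗ 1_S), where ρ_R = δ_R∘η_R : I → R⊗R and σ_S = ε_S∘μ_S : S⊗S → I. -/

import Mathlib

/-! Any monoid+comonoid morphism between Frobenius monoids is an isomorphism. -/

open CategoryTheory MonoidalCategory

universe v u

variable {V : Type u} [Category.{v} V] [MonoidalCategory V]

/-- A Frobenius monoid in a monoidal category `V`: an object with a monoid structure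
`(μ, η)` and a comonoid structure `(δ, ε)` satisfying the Frobenius law
`(μ⊗1)(1⊗δ) = δ∘μ = (1⊗μ)(δ⊗1)`. -/
structure FrobeniusMonoidIn (V : Type u) [Category.{v} V] [MonoidalCategory V] where
  X : V
  mul : X ⊗ X ⟶ X
  one : 𝟙_ V ⟶ X
  comul : X ⟶ X ⊗ X
  counit : X ⟶ 𝟙_ V
  mul_assoc : (mul ⊗ₘ 𝟙 X) ≫ mul = (α_ X X X).hom ≫ (𝟙 X ⊗ₘ mul) ≫ mul
  one_mul : (one ⊗ₘ 𝟙 X) ≫ mul = (λ_ X).hom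
  mul_one : (𝟙 X ⊗ₘ one) ≫ mul = (ρ_ X).hom
  comul_assoc : comul ≫ (comul ⊗ₘ 𝟙 X) ≫ (α_ X X X).hom = comul ≫ (𝟙 X ⊗ₘ comul)
  comul_counit_left : comul ≫ (counit ⊗ₘ 𝟙 X) ≫ (λ_ X).hom = 𝟙 X
  comul_counit_right : comul ≫ (𝟙 X ⊗ₘ counit) ≫ (ρ_ X).hom = 𝟙 X
  frobenius_left : (𝟙 X ⊗ₘ comul) ≫ (α_ X X X).inv ≫ (mul ⊗ₘ 𝟙 X) = mul ≫ comul
  frobenius_right : (comul ⊗ₘ 𝟙 X) ≫ (α_ X X X).hom ≫ (𝟙 X ⊗ₘ mul) = mul ≫ comul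

lemma FrobeniusMonoidIn.zigzag (R : FrobeniusMonoidIn V) :
    (λ_ R.X).inv ≫ ((R.one ≫ R.comul) ⊗ₘ 𝟙 R.X) ≫ (α_ R.X R.X R.X).hom ≫
      (𝟙 R.X ⊗ₘ (R.mul ≫ R.counit)) ≫ (ρ_ R.X).hom = 𝟙 R.X := by
  rw [comp_tensor_id, id_tensor_comp]
  slice_lhs 3 5 => rw [R.frobenius_right]
  slice_lhs 2 3 => rw [R.one_mul]
  slice_lhs 3 5 => rw [R.comul_counit_right]
  simp

set_option maxHeartbeats 1600000 in
/-- Every morphism of Frobenius monoids (simultaneously a monoid morphism and a comonoid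
morphism) `f : R ⟶ S` is an isomorphism, with inverse
`f⁻¹ = (1_R ⊗ₘ σ_S) ∘ (1_R ⊗ₘ f ⊗ₘ 1_S) ∘ (ρ_R ⊗ₘ 1_S)`, where `ρ_R = δ_R∘η_R` and
`σ_S = ε_S∘μ_S`. -/
theorem frobenius_morphism_isIso (R S : FrobeniusMonoidIn V) (f : R.X ⟶ S.X)
    (hmul : (f ⊗ₘ f) ≫ S.mul = R.mul ≫ f)
    (hone : R.one ≫ f = S.one)
    (hcomul : f ≫ S.comul = R.comul ≫ (f ⊗ₘ f))
    (hcounit : f ≫ S.counit = R.counit) :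
    f ≫ ((λ_ S.X).inv ≫ ((R.one ≫ R.comul) ⊗ₘ 𝟙 S.X) ≫ (α_ R.X R.X S.X).hom ≫
        (𝟙 R.X ⊗ₘ (f ⊗ₘ 𝟙 S.X)) ≫ (𝟙 R.X ⊗ₘ (S.mul ≫ S.counit)) ≫ (ρ_ R.X).hom) = 𝟙 R.X ∧
    ((λ_ S.X).inv ≫ ((R.one ≫ R.comul) ⊗ₘ 𝟙 S.X) ≫ (α_ R.X R.X S.X).hom ≫
        (𝟙 R.X ⊗ₘ (f ⊗ₘ 𝟙 S.X)) ≫ (𝟙 R.X ⊗ₘ (S.mul ≫ S.counit)) ≫ (ρ_ R.X).hom) ≫ f =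
      𝟙 S.X ∧
    IsIso f := by
  have hfg : f ≫ ((λ_ S.X).inv ≫ ((R.one ≫ R.comul) ⊗ₘ 𝟙 S.X) ≫ (α_ R.X R.X S.X).hom ≫
      (𝟙 R.X ⊗ₘ (f ⊗ₘ 𝟙 S.X)) ≫ (𝟙 R.X ⊗ₘ (S.mul ≫ S.counit)) ≫ (ρ_ R.X).hom) = 𝟙 R.X := by
    have h0 : f ≫ (λ_ S.X).inv = (λ_ R.X).inv ≫ (𝟙 (𝟙_ V) ⊗ₘ f) := by
      rw [id_tensorHom]; simp
    have h1 : (𝟙 (𝟙_ V) ⊗ₘ f) ≫ ((R.one ≫ R.comul) ⊗ₘ 𝟙 S.X)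
        = ((R.one ≫ R.comul) ⊗ₘ 𝟙 R.X) ≫ ((𝟙 R.X ⊗ₘ 𝟙 R.X) ⊗ₘ f) := by
      rw [tensorHom_comp_tensorHom, tensorHom_comp_tensorHom]
      simp only [Category.id_comp, Category.comp_id, id_tensorHom_id]
    have h2 : (𝟙 R.X ⊗ₘ (𝟙 R.X ⊗ₘ f)) ≫ (𝟙 R.X ⊗ₘ (f ⊗ₘ 𝟙 S.X)) = 𝟙 R.X ⊗ₘ (f ⊗ₘ f) := by
      rw [← id_tensor_comp, tensorHom_comp_tensorHom]
      simp only [Category.id_comp, Category.comp_id]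
    have h3 : (𝟙 R.X ⊗ₘ (f ⊗ₘ f)) ≫ (𝟙 R.X ⊗ₘ (S.mul ≫ S.counit))
        = 𝟙 R.X ⊗ₘ (R.mul ≫ R.counit) := by
      rw [← id_tensor_comp, ← Category.assoc, hmul, Category.assoc, hcounit]
    slice_lhs 1 2 => rw [h0]
    slice_lhs 2 3 => rw [h1]
    slice_lhs 3 4 => rw [associator_naturality]
    slice_lhs 4 5 => rw [h2]
    slice_lhs 4 5 => rw [h3]
    exact R.zigzag
  have hgf : ((λ_ S.X).inv ≫ ((R.one ≫ R.comul) ⊗ₘ 𝟙 S.X) ≫ (α_ R.X R.X S.X).hom ≫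
      (𝟙 R.X ⊗ₘ (f ⊗ₘ 𝟙 S.X)) ≫ (𝟙 R.X ⊗ₘ (S.mul ≫ S.counit)) ≫ (ρ_ R.X).hom) ≫ f
      = 𝟙 S.X := by
    have h1 : (ρ_ R.X).hom ≫ f = (f ⊗ₘ 𝟙 (𝟙_ V)) ≫ (ρ_ S.X).hom := by
      rw [tensorHom_id]; simp
    have h2 : (𝟙 R.X ⊗ₘ (S.mul ≫ S.counit)) ≫ (f ⊗ₘ 𝟙 (𝟙_ V))
        = (f ⊗ₘ (𝟙 S.X ⊗ₘ 𝟙 S.X)) ≫ (𝟙 S.X ⊗ₘ (S.mul ≫ S.counit)) := by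
      rw [tensorHom_comp_tensorHom, tensorHom_comp_tensorHom]
      simp only [Category.id_comp, Category.comp_id, id_tensorHom_id]
    have h3 : (𝟙 R.X ⊗ₘ (f ⊗ₘ 𝟙 S.X)) ≫ (f ⊗ₘ (𝟙 S.X ⊗ₘ 𝟙 S.X))
        = (f ⊗ₘ (𝟙 R.X ⊗ₘ 𝟙 S.X)) ≫ (𝟙 S.X ⊗ₘ (f ⊗ₘ 𝟙 S.X)) := by
      rw [tensorHom_comp_tensorHom, tensorHom_comp_tensorHom, tensorHom_comp_tensorHom, tensorHom_comp_tensorHom]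
      simp only [Category.id_comp, Category.comp_id]
    have h4 : (α_ R.X R.X S.X).hom ≫ (f ⊗ₘ (𝟙 R.X ⊗ₘ 𝟙 S.X))
        = ((f ⊗ₘ 𝟙 R.X) ⊗ₘ 𝟙 S.X) ≫ (α_ S.X R.X S.X).hom :=
      (associator_naturality f (𝟙 R.X) (𝟙 S.X)).symm
    have h5 : (α_ S.X R.X S.X).hom ≫ (𝟙 S.X ⊗ₘ (f ⊗ₘ 𝟙 S.X))
        = ((𝟙 S.X ⊗ₘ f) ⊗ₘ 𝟙 S.X) ≫ (α_ S.X S.X S.X).hom :=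
      (associator_naturality (𝟙 S.X) f (𝟙 S.X)).symm
    have h6 : ((R.one ≫ R.comul) ⊗ₘ 𝟙 S.X) ≫ ((f ⊗ₘ 𝟙 R.X) ⊗ₘ 𝟙 S.X)
        ≫ ((𝟙 S.X ⊗ₘ f) ⊗ₘ 𝟙 S.X) = (S.one ≫ S.comul) ⊗ₘ 𝟙 S.X := by
      rw [← comp_tensor_id, ← comp_tensor_id]
      congr 1
      rw [Category.assoc, tensorHom_comp_tensorHom]
      simp only [Category.comp_id, Category.id_comp]
      rw [← hcomul, ← Category.assoc, hone]
    slice_lhs 6 7 => rw [h1]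
    slice_lhs 5 6 => rw [h2]
    slice_lhs 4 5 => rw [h3]
    slice_lhs 3 4 => rw [h4]
    slice_lhs 4 5 => rw [h5]
    slice_lhs 2 4 => rw [h6]
    simpa only [Category.assoc] using S.zigzag
  exact ⟨hfg, hgf, ⟨_, hfg, hgf⟩⟩
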